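/- Let g ∈ R⟦t⟧[x_1,...,x_n] and fix w ∈ ℝ_{<0}×ℝ^n. Then the set {v ∈ ℝ_{<0}×ℝ^n : in_v(g) = in_w(g)} is the intersection of ℝ_{<0}×ℝ^n with a finite set of open linear half-spaces and linear hyperplanes; in particular it is a relatively open convex rational polyhedral cone. -/

import Mathlib

open MvPolynomial

noncomputable section

variable {R : Type*} [CommRing R] {n : ℕ}

/-- The mixed power-series–polynomial ring `R⟦t⟧[x₁,…,xₙ]`. -/
abbrev MixedRing (R : Type*) [CommRing R] (n : ℕ) :=
  MvPolynomial (Fin n) (PowerSeries R)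

/-- The polynomial ring `R[t][x₁,…,xₙ] = R[t,x]`. -/
abbrev PolyRing (R : Type*) [CommRing R] (n : ℕ) :=
  MvPolynomial (Fin n) (Polynomial R)

/-- A monomial `t^β x^α` is encoded as the pair `(α, β)`. -/
abbrev Mon (n : ℕ) := (Fin n →₀ ℕ) × ℕ

/-- The coefficient of `f ∈ R⟦t⟧[x]` at the monomial `t^β x^α`. -/
def coeffAt (f : MixedRing R n) (m : Mon n) : R :=
  PowerSeries.coeff m.2 (MvPolynomial.coeff m.1 f)

/-- The coefficient of `q ∈ R[t,x]` at the monomial `t^β x^α`. -/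
def coeffAtP (q : PolyRing R n) (m : Mon n) : R :=
  (MvPolynomial.coeff m.1 q).coeff m.2

/-- The `w`-weighted degree of the monomial `t^β x^α`, where `w = (w₀, w₁,…,wₙ)`. -/
def wdeg (w0 : ℝ) (w : Fin n → ℝ) (m : Mon n) : ℝ :=
  w0 * m.2 + ∑ i, w i * (m.1 i : ℝ)

/-- The maximal `w`-weighted degree of a term of `f ∈ R⟦t⟧[x]`
(as a supremum; it is attained when `w₀ < 0` and `f ≠ 0`). -/
def maxdeg (w0 : ℝ) (w : Fin n → ℝ) (f : MixedRing R n) : ℝ :=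
  sSup (wdeg w0 w '' {m | coeffAt f m ≠ 0})

/-- The least power of `t` occurring in a power series `s` (junk value `0` for `s = 0`). -/
def tord (s : PowerSeries R) : ℕ :=
  sInf {k | PowerSeries.coeff k s ≠ 0}

open Classical in
/-- The initial form `in_w(f)` of `f ∈ R⟦t⟧[x]` with respect to the weight
vector `w = (w₀, w) ∈ ℝ_{<0} × ℝⁿ`: the sum of the terms of `f` of maximal
`w`-weighted degree.  Since `w₀ < 0`, for each `x`-monomial `x^α` only the term
of least `t`-order can contribute, so the initial form is a polynomial in
`R[t,x]`. -/
def initialForm (w0 : ℝ) (w : Fin n → ℝ) (f : MixedRing R n) : PolyRing R n :=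
  ∑ α ∈ f.support,
    if wdeg w0 w (α, tord (MvPolynomial.coeff α f)) = maxdeg w0 w f then
      MvPolynomial.monomial α
        (Polynomial.monomial (tord (MvPolynomial.coeff α f))
          (PowerSeries.coeff (tord (MvPolynomial.coeff α f)) (MvPolynomial.coeff α f)))
    else 0

/-- `r` is a `t`-local monomial ordering on `Mon(t,x)`: a strict total order
(`r a b` meaning `a < b`) compatible with the semigroup structure and with
`t < 1` (so that leading monomials — the largest monomials occurring — of unit
power series are `1`). -/
def IsTLocalOrder (r : Mon n → Mon n → Prop) : Prop :=
  (∀ a b, a ≠ b → r a b ∨ r b a) ∧ (∀ a, ¬ r a a) ∧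
  (∀ a b c, r a b → r b c → r a c) ∧
  (∀ a b c, r a b → r (a + c) (b + c)) ∧
  r ((0 : Fin n →₀ ℕ), 1) ((0 : Fin n →₀ ℕ), 0)

/-- `f ∈ R⟦t⟧[x]` has leading term `c · t^β x^α` (with `m = (α,β)`) with respect
to the ordering `r`: the coefficient of `f` at `m` is `c ≠ 0` and every other
monomial occurring in `f` is `r`-smaller than `m`. -/
def IsLeadingTerm (r : Mon n → Mon n → Prop) (f : MixedRing R n) (m : Mon n) (c : R) : Prop :=
  coeffAt f m = c ∧ c ≠ 0 ∧ ∀ m', coeffAt f m' ≠ 0 → m' = m ∨ r m' m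

/-- Leading-term predicate for elements of `R[t,x]`. -/
def IsLeadingTermP (r : Mon n → Mon n → Prop) (q : PolyRing R n) (m : Mon n) (c : R) : Prop :=
  coeffAtP q m = c ∧ c ≠ 0 ∧ ∀ m', coeffAtP q m' ≠ 0 → m' = m ∨ r m' m

/-- The term `c · t^β x^α` as an element of `R[t,x]`. -/
def termA (m : Mon n) (c : R) : PolyRing R n :=
  MvPolynomial.monomial m.1 (Polynomial.monomial m.2 c)

/-- The leading ideal `lt_>(I) ⊆ R[t,x]` of an ideal `I ⊆ R⟦t⟧[x]`. -/
def ltIdeal (r : Mon n → Mon n → Prop) (I : Ideal (MixedRing R n)) : Ideal (PolyRing R n) :=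
  Ideal.span {q | ∃ f ∈ I, ∃ m c, IsLeadingTerm r f m c ∧ q = termA m c}

/-- The ideal of `R[t,x]` generated by the leading terms of a finite set `G ⊆ R⟦t⟧[x]`. -/
def ltSpan (r : Mon n → Mon n → Prop) (G : Finset (MixedRing R n)) : Ideal (PolyRing R n) :=
  Ideal.span {q | ∃ f ∈ G, ∃ m c, IsLeadingTerm r f m c ∧ q = termA m c}

/-- The leading ideal of an ideal `J ⊆ R[t,x]`. -/
def ltIdealP (r : Mon n → Mon n → Prop) (J : Ideal (PolyRing R n)) : Ideal (PolyRing R n) :=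
  Ideal.span {q | ∃ f ∈ J, ∃ m c, IsLeadingTermP r f m c ∧ q = termA m c}

/-- The initial ideal `in_w(I) ⊆ R[t,x]` of an ideal `I ⊆ R⟦t⟧[x]`. -/
def initialIdeal (w0 : ℝ) (w : Fin n → ℝ) (I : Ideal (MixedRing R n)) : Ideal (PolyRing R n) :=
  Ideal.span {q | ∃ f ∈ I, q = initialForm w0 w f}

/-- `f ∈ R⟦t⟧[x]` is `x`-homogeneous: all monomials occurring in `f` have the
same total degree in the variables `x₁,…,xₙ`. -/
def IsXHomogeneous (f : MixedRing R n) : Prop :=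
  ∃ d, ∀ α ∈ f.support, (α.sum fun _ e => e) = d

/-- An ideal `I ⊆ R⟦t⟧[x]` is `x`-homogeneous if it is generated by
`x`-homogeneous elements. -/
def Ideal.IsXHomogeneousIdeal (I : Ideal (MixedRing R n)) : Prop :=
  ∃ S : Set (MixedRing R n), (∀ f ∈ S, IsXHomogeneous f) ∧ I = Ideal.span S

/-- The `t`-initial truncation `Σ_α lt_>(g_α)·x^α` of `g = Σ_α g_α·x^α ∈ R⟦t⟧[x]`,
keeping for each `x`-monomial only the term of least `t`-power. -/
def tTrunc (g : MixedRing R n) : MixedRing R n :=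
  ∑ α ∈ g.support,
    MvPolynomial.monomial α
      ((PowerSeries.monomial (tord (MvPolynomial.coeff α g)))
        (PowerSeries.coeff (tord (MvPolynomial.coeff α g)) (MvPolynomial.coeff α g)))

/-- `G` is a standard basis of the ideal `I ⊆ R⟦t⟧[x]` with respect to `r`:
`G ⊆ I` and the leading terms of the elements of `G` generate the leading
ideal of `I`. -/
def IsStandardBasis (r : Mon n → Mon n → Prop) (I : Ideal (MixedRing R n))
    (G : Finset (MixedRing R n)) : Prop :=
  ↑G ⊆ (I : Set (MixedRing R n)) ∧ ltSpan r G = ltIdeal r I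

open Classical in
/-- `G` is an initially reduced standard basis of `I` w.r.t. `r`: a standard
basis that is minimal and such that no term of the `t`-initial truncation of
any `g ∈ G`, other than the leading term of `g`, lies in the leading ideal. -/
def IsInitiallyReducedSB (r : Mon n → Mon n → Prop) (I : Ideal (MixedRing R n))
    (G : Finset (MixedRing R n)) : Prop :=
  IsStandardBasis r I G ∧
  (∀ g ∈ G, ltSpan r (G.erase g) ≠ ltSpan r G) ∧
  (∀ g ∈ G, ∀ m, coeffAt (tTrunc g) m ≠ 0 → ¬ (∃ c, IsLeadingTerm r g m c) →
    termA m (coeffAt (tTrunc g) m) ∉ ltIdeal r I)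

/-- The (interior part of the) Gröbner cone `C_>(I)`: the Euclidean closure of
the set of weight vectors `v ∈ ℝ_{<0} × ℝⁿ` with `in_v(I) = lt_>(I)`. -/
def groebnerCone (r : Mon n → Mon n → Prop) (I : Ideal (MixedRing R n)) :
    Set (ℝ × (Fin n → ℝ)) :=
  closure {v : ℝ × (Fin n → ℝ) | v.1 < 0 ∧ initialIdeal v.1 v.2 I = ltIdeal r I}


/-- The `v`-weighted degree of the least-`t`-order term of `g` in the `x`-monomial `α`. -/
def dfun (g : MixedRing R n) (v : ℝ × (Fin n → ℝ)) (α : Fin n →₀ ℕ) : ℝ :=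
  wdeg v.1 v.2 (α, tord (MvPolynomial.coeff α g))

lemma tord_coeff_ne_zero {s : PowerSeries R} (hs : s ≠ 0) :
    PowerSeries.coeff (tord s) s ≠ 0 := by
  obtain ⟨k, hk⟩ : ∃ k, PowerSeries.coeff k s ≠ 0 := by
    by_contra h
    push_neg at h
    exact hs (PowerSeries.ext fun k => by simpa using h k)
  exact Nat.sInf_mem (⟨k, hk⟩ : {k | PowerSeries.coeff k s ≠ 0}.Nonempty)

lemma tord_le {s : PowerSeries R} {k : ℕ} (hk : PowerSeries.coeff k s ≠ 0) : tord s ≤ k :=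
  Nat.sInf_le hk

lemma mem_support_of_coeffAt {g : MixedRing R n} {m : Mon n} (h : coeffAt g m ≠ 0) :
    m.1 ∈ g.support := by
  rw [MvPolynomial.mem_support_iff]
  intro h0
  exact h (by simp [coeffAt, h0])

lemma coeffAt_tord_ne_zero {g : MixedRing R n} {α : Fin n →₀ ℕ} (hα : α ∈ g.support) :
    coeffAt g (α, tord (MvPolynomial.coeff α g)) ≠ 0 :=
  tord_coeff_ne_zero (MvPolynomial.mem_support_iff.1 hα)

lemma maxdeg_eq (g : MixedRing R n) (hg : g.support.Nonempty) (v : ℝ × (Fin n → ℝ))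
    (hv : v.1 < 0) : maxdeg v.1 v.2 g = g.support.sup' hg (dfun g v) := by
  have hub : ∀ x ∈ wdeg v.1 v.2 '' {m | coeffAt g m ≠ 0}, x ≤ g.support.sup' hg (dfun g v) := by
    rintro x ⟨m, hm, rfl⟩
    have h1 : m.1 ∈ g.support := mem_support_of_coeffAt hm
    have h2 : tord (MvPolynomial.coeff m.1 g) ≤ m.2 := tord_le hm
    have h3 : wdeg v.1 v.2 m ≤ dfun g v m.1 := by
      unfold wdeg dfun
      simp only [wdeg]
      have : v.1 * (m.2 : ℝ) ≤ v.1 * (tord (MvPolynomial.coeff m.1 g) : ℝ) :=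
        mul_le_mul_of_nonpos_left (by exact_mod_cast h2) hv.le
      linarith
    exact h3.trans (Finset.le_sup' (dfun g v) h1)
  have hne : (wdeg v.1 v.2 '' {m | coeffAt g m ≠ 0}).Nonempty := by
    obtain ⟨α, hα⟩ := hg
    exact ⟨dfun g v α, ⟨(α, tord (MvPolynomial.coeff α g)), coeffAt_tord_ne_zero hα, rfl⟩⟩
  refine le_antisymm (csSup_le hne hub) ?_
  apply Finset.sup'_le
  intro α hα
  exact le_csSup ⟨_, hub⟩ ⟨(α, tord (MvPolynomial.coeff α g)), coeffAt_tord_ne_zero hα, rfl⟩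

open Classical in
lemma coeff_initialForm_of_not_mem {g : MixedRing R n} {α : Fin n →₀ ℕ}
    (hα : α ∉ g.support) (w0 : ℝ) (w : Fin n → ℝ) :
    MvPolynomial.coeff α (initialForm w0 w g) = 0 := by
  unfold initialForm
  rw [MvPolynomial.coeff_sum]
  apply Finset.sum_eq_zero
  intro β hβ
  split_ifs with h
  · rw [MvPolynomial.coeff_monomial, if_neg]
    rintro rfl
    exact hα hβ
  · simp

open Classical in
lemma coeff_initialForm_of_mem {g : MixedRing R n} {α : Fin n →₀ ℕ}
    (hα : α ∈ g.support) (w0 : ℝ) (w : Fin n → ℝ) :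
    MvPolynomial.coeff α (initialForm w0 w g) =
      if wdeg w0 w (α, tord (MvPolynomial.coeff α g)) = maxdeg w0 w g then
        Polynomial.monomial (tord (MvPolynomial.coeff α g))
          (PowerSeries.coeff (tord (MvPolynomial.coeff α g)) (MvPolynomial.coeff α g))
      else 0 := by
  unfold initialForm
  rw [MvPolynomial.coeff_sum, Finset.sum_eq_single_of_mem α hα]
  · split_ifs with h
    · rw [MvPolynomial.coeff_monomial, if_pos rfl]
    · simp
  · intro β hβ hβα
    split_ifs with h
    · rw [MvPolynomial.coeff_monomial, if_neg hβα]
    · simp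

lemma initialForm_eq_iff (g : MixedRing R n) (v w : ℝ × (Fin n → ℝ)) :
    initialForm v.1 v.2 g = initialForm w.1 w.2 g ↔ ∀ α ∈ g.support,
      (dfun g v α = maxdeg v.1 v.2 g ↔ dfun g w α = maxdeg w.1 w.2 g) := by
  constructor
  · intro h α hα
    have hc := congrArg (MvPolynomial.coeff α) h
    rw [coeff_initialForm_of_mem hα, coeff_initialForm_of_mem hα] at hc
    have hp : (Polynomial.monomial (tord (MvPolynomial.coeff α g))
        (PowerSeries.coeff (tord (MvPolynomial.coeff α g)) (MvPolynomial.coeff α g)) :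
        Polynomial R) ≠ 0 := by
      have := tord_coeff_ne_zero (MvPolynomial.mem_support_iff.1 hα)
      simpa [Polynomial.monomial_eq_zero_iff] using this
    simp only [dfun]
    by_cases h1 : wdeg v.1 v.2 (α, tord (MvPolynomial.coeff α g)) = maxdeg v.1 v.2 g <;>
      by_cases h2 : wdeg w.1 w.2 (α, tord (MvPolynomial.coeff α g)) = maxdeg w.1 w.2 g
    · exact iff_of_true h1 h2
    · rw [if_pos h1, if_neg h2] at hc; exact absurd hc hp
    · rw [if_neg h1, if_pos h2] at hc; exact absurd hc.symm hp
    · exact iff_of_false h1 h2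
  · intro h
    apply MvPolynomial.ext
    intro α
    by_cases hα : α ∈ g.support
    · rw [coeff_initialForm_of_mem hα, coeff_initialForm_of_mem hα]
      exact if_congr (h α hα) rfl rfl
    · rw [coeff_initialForm_of_not_mem hα, coeff_initialForm_of_not_mem hα]

/-- For fixed `g ∈ R⟦t⟧[x]` and `w ∈ ℝ_{<0} × ℝⁿ`, the set of
weight vectors `v ∈ ℝ_{<0} × ℝⁿ` with `in_v(g) = in_w(g)` is the intersection
of `ℝ_{<0} × ℝⁿ` with finitely many open linear half-spaces and linear
hyperplanes, all with integer (in particular rational) coefficients; it is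
therefore a relatively open convex rational polyhedral cone. -/
theorem initialForm_equivClass_polyhedral (g : MixedRing R n)
    (w0 : ℝ) (hw0 : w0 < 0) (w : Fin n → ℝ) :
    ∃ (k l : ℕ) (A : Fin k → ℤ × (Fin n → ℤ)) (B : Fin l → ℤ × (Fin n → ℤ)),
      {v : ℝ × (Fin n → ℝ) | v.1 < 0 ∧ initialForm v.1 v.2 g = initialForm w0 w g} =
        {v : ℝ × (Fin n → ℝ) | v.1 < 0} ∩
        {v | ∀ i, 0 < ((A i).1 : ℝ) * v.1 + ∑ j, ((A i).2 j : ℝ) * v.2 j} ∩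
        {v | ∀ i, ((B i).1 : ℝ) * v.1 + ∑ j, ((B i).2 j : ℝ) * v.2 j = 0} := by
  classical
  by_cases hg : g = 0
  · refine ⟨0, 0, Fin.elim0, Fin.elim0, ?_⟩
    ext v
    simp only [Set.mem_setOf_eq, Set.mem_inter_iff]
    have h0 : ∀ (a : ℝ) (b : Fin n → ℝ), initialForm a b g = 0 := by
      intro a b; simp [initialForm, hg]
    constructor
    · rintro ⟨h1, -⟩; exact ⟨⟨h1, fun i => i.elim0⟩, fun i => i.elim0⟩
    · rintro ⟨⟨h1, -⟩, -⟩; exact ⟨h1, by rw [h0, h0]⟩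
  · have hsupp : g.support.Nonempty := by
      rw [Finset.nonempty_iff_ne_empty]
      intro h
      exact hg (MvPolynomial.support_eq_empty.1 h)
    obtain ⟨α₀, hα₀s, hα₀⟩ := Finset.exists_mem_eq_sup' hsupp (dfun g (w0, w))
    set S : Finset (Fin n →₀ ℕ) :=
      g.support.filter (fun α => dfun g (w0, w) α = maxdeg w0 w g) with hSdef
    have hα₀S : α₀ ∈ S := by
      rw [hSdef, Finset.mem_filter]
      refine ⟨hα₀s, ?_⟩
      rw [maxdeg_eq g hsupp (w0, w) hw0, hα₀]
    set T : Finset (Fin n →₀ ℕ) := g.support \ S with hTdef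
    set vec : (Fin n →₀ ℕ) → ℤ × (Fin n → ℤ) :=
      fun α => ((tord (MvPolynomial.coeff α g) : ℤ), fun j => (α j : ℤ)) with hvec
    have eval : ∀ (β γ : Fin n →₀ ℕ) (v : ℝ × (Fin n → ℝ)),
        (((vec β).1 - (vec γ).1 : ℤ) : ℝ) * v.1 +
          ∑ j, (((vec β).2 j - (vec γ).2 j : ℤ) : ℝ) * v.2 j = dfun g v β - dfun g v γ := by
      intro β γ v
      simp only [hvec, dfun, wdeg]
      push_cast
      have hsum : ∀ δ : Fin n →₀ ℕ, ∑ j, v.2 j * (δ j : ℝ) = ∑ j, (δ j : ℝ) * v.2 j :=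
        fun δ => Finset.sum_congr rfl fun j _ => mul_comm _ _
      simp only [sub_mul, Finset.sum_sub_distrib, hsum]
      ring
    refine ⟨T.card, S.card, fun i =>
        ((vec α₀).1 - (vec ((T.equivFin.symm i : T) : Fin n →₀ ℕ)).1,
          fun j => (vec α₀).2 j - (vec ((T.equivFin.symm i : T) : Fin n →₀ ℕ)).2 j),
      fun i =>
        ((vec ((S.equivFin.symm i : S) : Fin n →₀ ℕ)).1 - (vec α₀).1,
          fun j => (vec ((S.equivFin.symm i : S) : Fin n →₀ ℕ)).2 j - (vec α₀).2 j), ?_⟩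
    ext v
    simp only [Set.mem_setOf_eq, Set.mem_inter_iff]
    have hAi : ∀ i : Fin T.card,
        ((((vec α₀).1 - (vec ((T.equivFin.symm i : T) : Fin n →₀ ℕ)).1 : ℤ)) : ℝ) * v.1 +
          ∑ j, (((vec α₀).2 j - (vec ((T.equivFin.symm i : T) : Fin n →₀ ℕ)).2 j : ℤ) : ℝ) *
            v.2 j = dfun g v α₀ - dfun g v ((T.equivFin.symm i : T) : Fin n →₀ ℕ) :=
      fun i => eval α₀ _ v
    have hBi : ∀ i : Fin S.card,
        ((((vec ((S.equivFin.symm i : S) : Fin n →₀ ℕ)).1 - (vec α₀).1 : ℤ)) : ℝ) * v.1 +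
          ∑ j, (((vec ((S.equivFin.symm i : S) : Fin n →₀ ℕ)).2 j - (vec α₀).2 j : ℤ) : ℝ) *
            v.2 j = dfun g v ((S.equivFin.symm i : S) : Fin n →₀ ℕ) - dfun g v α₀ :=
      fun i => eval _ α₀ v
    constructor
    · rintro ⟨hv, heq⟩
      have H := (initialForm_eq_iff g v (w0, w)).1 heq
      have hMα₀ : dfun g v α₀ = maxdeg v.1 v.2 g := by
        refine (H α₀ hα₀s).2 ?_
        exact (Finset.mem_filter.1 hα₀S).2
      refine ⟨⟨hv, ?_⟩, ?_⟩
      · intro i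
        rw [hAi i]
        set β : Fin n →₀ ℕ := ((T.equivFin.symm i : T) : Fin n →₀ ℕ) with hβ
        have hβT : β ∈ T := (T.equivFin.symm i).2
        obtain ⟨hβsupp, hβS⟩ := Finset.mem_sdiff.1 hβT
        have hne : dfun g v β ≠ maxdeg v.1 v.2 g := by
          intro hc
          exact hβS (Finset.mem_filter.2 ⟨hβsupp, (H β hβsupp).1 hc⟩)
        have hle : dfun g v β ≤ maxdeg v.1 v.2 g := by
          rw [maxdeg_eq g hsupp v hv]
          exact Finset.le_sup' _ hβsupp
        have := lt_of_le_of_ne hle hne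
        rw [← hMα₀] at this
        linarith
      · intro i
        rw [hBi i]
        set β : Fin n →₀ ℕ := ((S.equivFin.symm i : S) : Fin n →₀ ℕ) with hβ
        have hβS : β ∈ S := (S.equivFin.symm i).2
        obtain ⟨hβsupp, hβw⟩ := Finset.mem_filter.1 hβS
        have : dfun g v β = maxdeg v.1 v.2 g := (H β hβsupp).2 hβw
        rw [this, hMα₀, sub_self]
    · rintro ⟨⟨hv, hA⟩, hB⟩
      have hT : ∀ β ∈ T, dfun g v β < dfun g v α₀ := by
        intro β hβ
        have := hA (T.equivFin ⟨β, hβ⟩)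
        rw [hAi] at this
        rw [Equiv.symm_apply_apply] at this
        linarith
      have hSeq : ∀ β ∈ S, dfun g v β = dfun g v α₀ := by
        intro β hβ
        have := hB (S.equivFin ⟨β, hβ⟩)
        rw [hBi] at this
        rw [Equiv.symm_apply_apply] at this
        linarith
      have hMv : maxdeg v.1 v.2 g = dfun g v α₀ := by
        rw [maxdeg_eq g hsupp v hv]
        refine le_antisymm (Finset.sup'_le _ _ fun β hβ => ?_) (Finset.le_sup' _ hα₀s)
        by_cases hβS : β ∈ S
        · exact (hSeq β hβS).le
        · exact (hT β (Finset.mem_sdiff.2 ⟨hβ, hβS⟩)).le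
      refine ⟨hv, (initialForm_eq_iff g v (w0, w)).2 fun α hα => ?_⟩
      constructor
      · intro hPv
        by_contra hPw
        have hαT : α ∈ T :=
          Finset.mem_sdiff.2 ⟨hα, fun hc => hPw (Finset.mem_filter.1 hc).2⟩
        have := hT α hαT
        rw [hPv, hMv] at this
        exact lt_irrefl _ this
      · intro hPw
        have hαS : α ∈ S := Finset.mem_filter.2 ⟨hα, hPw⟩
        rw [hMv]
        exact hSeq α hαS

end
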